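/- arXiv:2407.15357 — 4 statements merged into one kernel-verified Lean document; each statement's English description precedes it below -/
import Mathlib

section
/- Let a be a self-adjoint matrix and define the superoperator L_a(ρ) = 2aρa - (a²ρ + ρa²). If Z is a standard Gaussian random variable, then for all t ≥ 0, E[e^{-i√(2t)·Z·a} ρ e^{i√(2t)·Z·a}] = e^{t L_a}(ρ) for every matrix ρ. -/
open scoped Matrix.Norms.L2Operator

noncomputable instance {d : Type*} [Fintype d] [DecidableEq d] :
    IsTopologicalRing (Matrix d d ℂ →L[ℂ] Matrix d d ℂ) :=
  @NonUnitalSeminormedRing.toIsTopologicalRing (Matrix d d ℂ →L[ℂ] Matrix d d ℂ)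
    SeminormedRing.toNonUnitalSeminormedRing

open MeasureTheory
open scoped ENNReal NNReal

/-- Applying `exp` of a continuous linear map to an eigenvector. -/
lemma exp_clm_apply_eigen {E : Type*} [NormedAddCommGroup E] [NormedSpace ℂ E] [CompleteSpace E]
    (A : E →L[ℂ] E) (y : E) (μ : ℂ) (h : A y = μ • y) :
    NormedSpace.exp A y = Complex.exp μ • y := by
  have hpow : ∀ n : ℕ, (A ^ n) y = μ ^ n • y := by
    intro n
    induction n with
    | zero => simp
    | succ n ih =>
        rw [pow_succ, ContinuousLinearMap.mul_apply, h, (A ^ n).map_smul, ih, smul_smul, pow_succ]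
        ring_nf
  have hsA : Summable (fun n : ℕ => (Nat.factorial n : ℂ)⁻¹ • A ^ n) := NormedSpace.expSeries_summable' A
  have hsμ : Summable (fun n : ℕ => (Nat.factorial n : ℂ)⁻¹ * μ ^ n) := by
    simpa [smul_eq_mul] using NormedSpace.expSeries_summable' (𝕂 := ℂ) μ
  have := (ContinuousLinearMap.apply ℂ E y).map_tsum hsA
  rw [NormedSpace.exp_eq_tsum ℂ]
  calc (∑' n : ℕ, (Nat.factorial n : ℂ)⁻¹ • A ^ n) y
      = ∑' n : ℕ, ((Nat.factorial n : ℂ)⁻¹ • A ^ n) y := this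
    _ = ∑' n : ℕ, ((Nat.factorial n : ℂ)⁻¹ * μ ^ n) • y := by
        congr 1; funext n
        rw [ContinuousLinearMap.smul_apply, hpow, smul_smul]
    _ = (∑' n : ℕ, (Nat.factorial n : ℂ)⁻¹ * μ ^ n) • y := Summable.tsum_smul_const hsμ y
    _ = Complex.exp μ • y := by
        congr 1
        rw [Complex.exp_eq_exp_ℂ, NormedSpace.exp_eq_tsum ℂ]
        simp [smul_eq_mul]

/-- The characteristic-type integral of a standard Gaussian. -/
lemma gaussian_cexp_integral (r : ℝ) :
    (∫ z, Complex.exp ((r : ℂ) * Complex.I * (z : ℝ)) ∂(ProbabilityTheory.gaussianReal 0 1)) =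
      Complex.exp (-(r : ℂ) ^ 2 / 2) := by
  rw [ProbabilityTheory.gaussianReal_of_var_ne_zero 0 one_ne_zero]
  have hmeas : Measurable fun x : ℝ => (ProbabilityTheory.gaussianPDFReal 0 1 x).toNNReal :=
    (ProbabilityTheory.measurable_gaussianPDFReal 0 1).real_toNNReal
  have hpdf : ∀ x : ℝ, ProbabilityTheory.gaussianPDF 0 1 x
      = ((ProbabilityTheory.gaussianPDFReal 0 1 x).toNNReal : ℝ≥0∞) := fun x => rfl
  simp only [ProbabilityTheory.gaussianPDF_def]
  rw [show (fun x => ENNReal.ofReal (ProbabilityTheory.gaussianPDFReal 0 1 x))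
      = (fun x => ((ProbabilityTheory.gaussianPDFReal 0 1 x).toNNReal : ℝ≥0∞)) from rfl]
  rw [integral_withDensity_eq_integral_smul hmeas]
  have hval : ∀ x : ℝ, ((ProbabilityTheory.gaussianPDFReal 0 1 x).toNNReal : ℝ≥0)
      • Complex.exp ((r : ℂ) * Complex.I * (x : ℝ))
      = ((Real.sqrt (2 * Real.pi))⁻¹ : ℂ)
        * Complex.exp ((-2⁻¹ : ℂ) * (x:ℝ) ^ 2 + ((r : ℂ) * Complex.I) * (x:ℝ) + 0) := by
    intro x
    have h1 : ProbabilityTheory.gaussianPDFReal 0 1 x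
        = (Real.sqrt (2 * Real.pi))⁻¹ * Real.exp (-2⁻¹ * x ^ 2) := by
      rw [ProbabilityTheory.gaussianPDFReal]
      norm_num
      left; ring
    rw [NNReal.smul_def, Real.coe_toNNReal _ (ProbabilityTheory.gaussianPDFReal_nonneg 0 1 x), h1,
      Complex.real_smul]
    push_cast
    rw [mul_assoc, ← Complex.exp_add]
    congr 2
    ring
  rw [show (fun x : ℝ => ((ProbabilityTheory.gaussianPDFReal 0 1 x).toNNReal : ℝ≥0)
      • Complex.exp ((r : ℂ) * Complex.I * (x : ℝ)))
      = fun x : ℝ => ((Real.sqrt (2 * Real.pi))⁻¹ : ℂ)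
        * Complex.exp ((-2⁻¹ : ℂ) * (x:ℝ) ^ 2 + ((r : ℂ) * Complex.I) * (x:ℝ) + 0)
      from funext hval]
  rw [integral_const_mul, integral_cexp_quadratic (by norm_num : (-2⁻¹ : ℂ).re < 0)]
  have h2π : (0:ℝ) < 2 * Real.pi := by positivity
  have hsq : ((Real.pi : ℂ) / -(-2⁻¹)) ^ (1/2 : ℂ) = ((Real.sqrt (2 * Real.pi) : ℝ) : ℂ) := by
    rw [show ((Real.pi : ℂ) / -(-2⁻¹)) = (((2 * Real.pi : ℝ)) : ℂ) by push_cast; ring]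
    rw [Real.sqrt_eq_rpow, Complex.ofReal_cpow h2π.le]
    norm_num
  rw [hsq]
  have hne : ((Real.sqrt (2 * Real.pi) : ℝ) : ℂ) ≠ 0 := by
    simpa using (Real.sqrt_ne_zero'.mpr h2π)
  rw [← mul_assoc, inv_mul_cancel₀ hne, one_mul]
  congr 1
  have : ((r:ℂ) * Complex.I) ^ 2 = -(r:ℂ)^2 := by
    rw [mul_pow, Complex.I_sq]; ring
  rw [this]; ring

/-- For a self-adjoint matrix `a` and `L_a(ρ) = 2aρa - (a²ρ + ρa²)`, averaging the
conjugations `e^{-i√(2t) Z a} ρ e^{i√(2t) Z a}` over a standard Gaussian `Z` yields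
the semigroup `e^{t L_a}(ρ)`. -/
theorem gaussian_unitary_mixing {d : Type*} [Fintype d] [DecidableEq d]
    (a : Matrix d d ℂ) (ha : a.IsHermitian)
    (La : Matrix d d ℂ →L[ℂ] Matrix d d ℂ)
    (hLa : ∀ ρ, La ρ = (2 : ℂ) • (a * ρ * a) - (a ^ 2 * ρ + ρ * a ^ 2))
    (t : ℝ) (ht : 0 ≤ t) (ρ : Matrix d d ℂ) :
    (∫ z, NormedSpace.exp ((-(Complex.I) * ((Real.sqrt (2 * t) * z : ℝ) : ℂ)) • a) * ρ *
        NormedSpace.exp ((Complex.I * ((Real.sqrt (2 * t) * z : ℝ) : ℂ)) • a)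
      ∂(ProbabilityTheory.gaussianReal 0 1)) =
    NormedSpace.exp ((t : ℂ) • La) ρ := by
  classical
  set s : ℝ := Real.sqrt (2 * t) with hs_def
  have hs2 : s ^ 2 = 2 * t := Real.sq_sqrt (by linarith)
  set U : Matrix d d ℂ := (ha.eigenvectorUnitary : Matrix d d ℂ) with hU_def
  have hU₁ : star U * U = 1 := Matrix.mem_unitaryGroup_iff'.mp ha.eigenvectorUnitary.2
  have hU₂ : U * star U = 1 := Matrix.mem_unitaryGroup_iff.mp ha.eigenvectorUnitary.2
  set E : d → ℝ := ha.eigenvalues with hE_def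
  set P : d → Matrix d d ℂ := fun p => U * Matrix.single p p 1 * star U with hP_def
  have hspec : a = U * Matrix.diagonal (fun i => (E i : ℂ)) * star U := by
    convert ha.spectral_theorem using 3
    rw [Unitary.conjStarAlgAut_apply]; rfl
  have hfact : ∀ X Y : Matrix d d ℂ,
      (U * X * star U) * (U * Y * star U) = U * (X * Y) * star U := by
    intro X Y
    have h : (U * X * star U) * (U * Y * star U) = U * X * (star U * U) * Y * star U := by
      simp only [mul_assoc]
    rw [h, hU₁, mul_one, mul_assoc U X Y]
  -- diagonal matrices as sums of std basis matrices
  have hdiag : ∀ v : d → ℂ, Matrix.diagonal v = ∑ p, v p • Matrix.single p p 1 := by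
    intro v
    ext i j
    rw [Matrix.sum_apply]
    by_cases h : i = j
    · subst h
      simp [Matrix.single, Matrix.diagonal_apply_eq, Finset.sum_ite_eq]
    · rw [Matrix.diagonal_apply_ne _ h]
      symm
      apply Finset.sum_eq_zero
      intro x _
      by_cases hx : x = i <;> simp [Matrix.single, hx, h]
  -- multiplication of diagonal with std basis matrices
  have hDS : ∀ p, Matrix.diagonal (fun i => (E i : ℂ)) * Matrix.single p p 1
      = (E p : ℂ) • Matrix.single p p 1 := by
    intro p
    ext i j
    by_cases h : i = p
    · subst h; simp [Matrix.single, Matrix.diagonal_mul]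
    · simp [Matrix.single, Matrix.diagonal_mul, h, Ne.symm h]
  have hSD : ∀ p, Matrix.single p p 1 * Matrix.diagonal (fun i => (E i : ℂ))
      = (E p : ℂ) • Matrix.single p p 1 := by
    intro p
    ext i j
    by_cases h : j = p
    · subst h; simp [Matrix.single, Matrix.mul_diagonal]
    · simp [Matrix.single, Matrix.mul_diagonal, h, Ne.symm h]
  -- exp of c • a
  have hexp : ∀ c : ℂ, NormedSpace.exp (c • a) =
      ∑ p, Complex.exp (c * E p) • P p := by
    intro c
    have hca : c • a = U * Matrix.diagonal (fun i => c * (E i : ℂ)) * star U := by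
      rw [hspec,
        show (Matrix.diagonal fun i => c * (E i : ℂ)) = c • Matrix.diagonal (fun i => (E i : ℂ))
          from by rw [← Matrix.diagonal_smul]; rfl,
        Matrix.mul_smul, Matrix.smul_mul]
    have hu : ∀ A : Matrix d d ℂ,
        NormedSpace.exp (U * A * star U) = U * NormedSpace.exp A * star U := by
      intro A
      simpa using Matrix.exp_units_conj (⟨U, star U, hU₂, hU₁⟩ : (Matrix d d ℂ)ˣ) A
    simp only [Complex.exp_eq_exp_ℂ]
    rw [hca, hu, Matrix.exp_diagonal, hdiag, Finset.mul_sum, Finset.sum_mul]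
    refine Finset.sum_congr rfl fun p _ => ?_
    rw [mul_smul_comm, smul_mul_assoc, hP_def, Pi.coe_exp]
  -- projections facts
  have hsumP : ∑ p, P p = 1 := by
    have h1 : (1 : Matrix d d ℂ) = ∑ p, Matrix.single p p 1 := by
      simpa using hdiag (fun _ => (1 : ℂ))
    calc ∑ p, P p = U * (∑ p, Matrix.single p p 1) * star U := by
          simp only [hP_def]
          rw [← Finset.sum_mul, ← Finset.mul_sum]
      _ = 1 := by rw [← h1, mul_one, hU₂]
  have haP : ∀ p, a * P p = (E p : ℂ) • P p := by
    intro p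
    calc a * P p = U * (Matrix.diagonal (fun i => (E i : ℂ)) * Matrix.single p p 1)
          * star U := by rw [hspec]; exact hfact _ _
      _ = (E p : ℂ) • P p := by
          rw [hDS, Matrix.mul_smul, Matrix.smul_mul]
  have hPa : ∀ q, P q * a = (E q : ℂ) • P q := by
    intro q
    calc P q * a = U * (Matrix.single q q 1 * Matrix.diagonal (fun i => (E i : ℂ)))
          * star U := by rw [hspec]; exact hfact _ _
      _ = (E q : ℂ) • P q := by
          rw [hSD, Matrix.mul_smul, Matrix.smul_mul]
  -- La eigenvalue relation
  have hLaP : ∀ p q, La (P p * ρ * P q)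
      = (-(((E p : ℂ) - (E q : ℂ)) ^ 2)) • (P p * ρ * P q) := by
    intro p q
    set Y : Matrix d d ℂ := P p * ρ * P q with hY_def
    have haY : a * Y = (E p : ℂ) • Y := by
      have hre : a * (P p * ρ * P q) = a * P p * ρ * P q := by
        rw [mul_assoc (P p) ρ (P q), mul_assoc (a * P p) ρ (P q), mul_assoc a (P p) (ρ * P q)]
      rw [hY_def, hre, haP, smul_mul_assoc, smul_mul_assoc]
    have hYa : Y * a = (E q : ℂ) • Y := by
      rw [hY_def, mul_assoc (P p * ρ) (P q) a, hPa, mul_smul_comm]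
    have h1 : a * Y * a = ((E p : ℂ) * (E q : ℂ)) • Y := by
      rw [haY, smul_mul_assoc, hYa, smul_smul]
    have h2 : a ^ 2 * Y = ((E p : ℂ) * (E p : ℂ)) • Y := by
      rw [sq, mul_assoc a a Y, haY, mul_smul_comm, haY, smul_smul]
    have h3 : Y * a ^ 2 = ((E q : ℂ) * (E q : ℂ)) • Y := by
      rw [sq, ← mul_assoc Y a a, hYa, smul_mul_assoc, hYa, smul_smul]
    rw [hLa, h1, h2, h3, smul_smul, ← add_smul, ← sub_smul]
    congr 1
    ring
  -- integrability of the scalar integrands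
  have hint : ∀ r : ℝ, MeasureTheory.Integrable
      (fun z : ℝ => Complex.exp ((r : ℂ) * Complex.I * (z : ℂ)))
      (ProbabilityTheory.gaussianReal 0 1) := by
    intro r
    have hc : Continuous fun z : ℝ => Complex.exp ((r : ℂ) * Complex.I * (z : ℂ)) :=
      Complex.continuous_exp.comp (continuous_const.mul Complex.continuous_ofReal)
    refine (MeasureTheory.integrable_const (1 : ℝ)).mono' hc.aestronglyMeasurable ?_
    filter_upwards with z
    rw [Complex.norm_exp]
    simp [Complex.mul_re, Complex.mul_im]
  -- pointwise decomposition of the integrand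
  have hintegrand : ∀ z : ℝ,
      NormedSpace.exp ((-(Complex.I) * ((s * z : ℝ) : ℂ)) • a) * ρ *
        NormedSpace.exp ((Complex.I * ((s * z : ℝ) : ℂ)) • a)
      = ∑ p, ∑ q, Complex.exp (((-(s * (E p - E q)) : ℝ) : ℂ) * Complex.I * (z : ℂ))
          • (P p * ρ * P q) := by
    intro z
    rw [hexp, hexp, Finset.sum_mul, Finset.sum_mul]
    simp only [Finset.mul_sum, smul_mul_assoc, mul_smul_comm, smul_smul]
    refine Finset.sum_congr rfl fun p _ => Finset.sum_congr rfl fun q _ => ?_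
    congr 1
    rw [← Complex.exp_add]
    congr 1
    push_cast
    ring
  -- decomposition of ρ
  have hρ : ρ = ∑ p, ∑ q, P p * ρ * P q := by
    have h : ∑ p, ∑ q, P p * ρ * P q = (∑ p, P p) * ρ * (∑ q, P q) := by
      rw [Finset.sum_mul, Finset.sum_mul]
      simp only [Finset.mul_sum]
    rw [h, hsumP, one_mul, mul_one]
  -- compute the right-hand side
  have hRHS : NormedSpace.exp ((t : ℂ) • La) ρ
      = ∑ p, ∑ q, Complex.exp ((t : ℂ) * (-(((E p : ℂ) - (E q : ℂ)) ^ 2)))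
          • (P p * ρ * P q) := by
    conv_lhs => rw [hρ]
    rw [map_sum]
    refine Finset.sum_congr rfl fun p _ => ?_
    rw [map_sum]
    refine Finset.sum_congr rfl fun q _ => ?_
    exact exp_clm_apply_eigen _ _ _
      (by rw [ContinuousLinearMap.smul_apply, hLaP p q, smul_smul])
  -- compute the left-hand side
  calc (∫ z, NormedSpace.exp ((-(Complex.I) * ((s * z : ℝ) : ℂ)) • a) * ρ *
        NormedSpace.exp ((Complex.I * ((s * z : ℝ) : ℂ)) • a)
      ∂(ProbabilityTheory.gaussianReal 0 1))
      = ∫ z, ∑ p, ∑ q,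
          Complex.exp (((-(s * (E p - E q)) : ℝ) : ℂ) * Complex.I * (z : ℂ))
            • (P p * ρ * P q) ∂(ProbabilityTheory.gaussianReal 0 1) := by
        simp only [hintegrand]
    _ = ∑ p, ∑ q, (∫ z, Complex.exp (((-(s * (E p - E q)) : ℝ) : ℂ) * Complex.I * (z : ℂ))
          ∂(ProbabilityTheory.gaussianReal 0 1)) • (P p * ρ * P q) := by
        rw [MeasureTheory.integral_finset_sum]
        · refine Finset.sum_congr rfl fun p _ => ?_
          rw [MeasureTheory.integral_finset_sum]
          · exact Finset.sum_congr rfl fun q _ => integral_smul_const _ _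
          · exact fun q _ => (hint _).smul_const _
        · exact fun p _ => MeasureTheory.integrable_finset_sum _ fun q _ => (hint _).smul_const _
    _ = NormedSpace.exp ((t : ℂ) • La) ρ := by
        rw [hRHS]
        refine Finset.sum_congr rfl fun p _ => Finset.sum_congr rfl fun q _ => ?_
        rw [gaussian_cexp_integral]
        congr 1
        congr 1
        have h2 : ((s : ℂ)) ^ 2 = 2 * (t : ℂ) := by
          rw [← Complex.ofReal_pow, hs2]; push_cast; ring
        push_cast
        linear_combination (-(((E p : ℂ) - (E q : ℂ)) ^ 2) / 2) * h2
end

section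
/- Let S = {X, Y} (single-qubit Pauli X and Y) and define the Lipschitz seminorm ‖|x|‖_S = max(‖[X,x]‖, ‖[Y,x]‖) (operator norm of commutators). For the replacer map Φ*(x) = K₀*xK₀ + K₁*xK₁ with K₀ = |0⟩⟨0|, K₁ = |0⟩⟨1|, one has ‖Φ*(x) - x‖ ≤ 2·‖|x|‖_S for all 2×2 matrices x. -/
set_option maxHeartbeats 1000000

open Matrix

open scoped Matrix.Norms.L2Operator

/-- Lipschitz bound for the adjoint of the replacer channel with Kraus operators
`K₀ = |0⟩⟨0|`, `K₁ = |0⟩⟨1|`: for all `x`,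
`‖Φ*(x) - x‖ ≤ 2 max(‖[X,x]‖, ‖[Y,x]‖)`. -/
theorem replacer_lipschitz (X Y K₀ K₁ : Matrix (Fin 2) (Fin 2) ℂ)
    (hX : X = !![0, 1; 1, 0]) (hY : Y = !![0, Complex.I; -Complex.I, 0])
    (hK₀ : K₀ = !![1, 0; 0, 0]) (hK₁ : K₁ = !![0, 1; 0, 0])
    (x : Matrix (Fin 2) (Fin 2) ℂ) :
    ‖K₀ᴴ * x * K₀ + K₁ᴴ * x * K₁ - x‖ ≤
      2 * max ‖X * x - x * X‖ ‖Y * x - x * Y‖ := by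
  set A : Matrix (Fin 2) (Fin 2) ℂ := x * X - X * x with hA
  set B : Matrix (Fin 2) (Fin 2) ℂ := x * Y - Y * x with hB
  have none1 : ‖(1 : Matrix (Fin 2) (Fin 2) ℂ)‖ = 1 := by
    rw [Matrix.cstar_norm_def, _root_.map_one]; exact ContinuousLinearMap.norm_id
  have hXu : star X * X = 1 := by
    ext i j; fin_cases i <;> fin_cases j <;>
      simp [hX, Matrix.mul_apply, Fin.sum_univ_succ, Matrix.star_eq_conjTranspose,
        Matrix.one_apply]
  have hYu : star Y * Y = 1 := by
    ext i j; fin_cases i <;> fin_cases j <;>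
      simp [hY, Matrix.mul_apply, Fin.sum_univ_succ, Matrix.star_eq_conjTranspose,
        Matrix.one_apply, Complex.ext_iff]
  have nX : ‖X‖ = 1 := by
    have := CStarRing.norm_star_mul_self (x := X)
    rw [hXu, none1] at this
    nlinarith [norm_nonneg X]
  have nY : ‖Y‖ = 1 := by
    have := CStarRing.norm_star_mul_self (x := Y)
    rw [hYu, none1] at this
    nlinarith [norm_nonneg Y]
  have hK₀p : star K₀ * K₀ = K₀ := by
    ext i j; fin_cases i <;> fin_cases j <;>
      simp [hK₀, Matrix.mul_apply, Fin.sum_univ_succ, Matrix.star_eq_conjTranspose]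
  have nK₀ : ‖K₀‖ = 1 := by
    have h := CStarRing.norm_star_mul_self (x := K₀)
    rw [hK₀p] at h
    have hne : K₀ ≠ 0 := by
      intro h0
      rw [hK₀] at h0
      have := congrFun (congrFun h0 0) 0
      simp at this
    have hpos : 0 < ‖K₀‖ := norm_pos_iff.mpr hne
    nlinarith
  have nK₀H : ‖K₀ᴴ‖ = 1 := by
    have h : K₀ᴴ = K₀ := by
      rw [hK₀]; ext i j; fin_cases i <;> fin_cases j <;> simp
    rw [h, nK₀]
  have nK₁H : ‖K₁ᴴ‖ = 1 := by
    have h := CStarRing.norm_star_mul_self (x := K₁ᴴ)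
    have he : star K₁ᴴ * K₁ᴴ = K₀ := by
      ext i j; fin_cases i <;> fin_cases j <;>
        simp [hK₀, hK₁, Matrix.mul_apply, Fin.sum_univ_succ, Matrix.star_eq_conjTranspose]
    rw [he, nK₀] at h
    nlinarith [norm_nonneg K₁ᴴ]
  -- algebraic identities
  have hC0 : x * K₀ - K₀ * x = (Complex.I / 2) • (X * B + A * Y) := by
    ext i j; fin_cases i <;> fin_cases j <;>
      simp [hX, hY, hK₀, hA, hB, Matrix.mul_apply, Fin.sum_univ_succ, Matrix.vecMul,
        dotProduct, Matrix.vecHead, Matrix.vecTail] <;>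
      (try ring_nf) <;> (try simp [Complex.I_sq]) <;> (try ring)
  have hC1 : x * K₁ - K₁ * x = (1/2 : ℂ) • (A - Complex.I • B) := by
    ext i j; fin_cases i <;> fin_cases j <;>
      simp [hX, hY, hK₁, hA, hB, Matrix.mul_apply, Fin.sum_univ_succ, Matrix.vecMul,
        dotProduct, Matrix.vecHead, Matrix.vecTail] <;>
      (try ring_nf) <;> (try simp [Complex.I_sq]) <;> (try ring)
  have hsum : K₀ᴴ * x * K₀ + K₁ᴴ * x * K₁ - x
      = K₀ᴴ * (x * K₀ - K₀ * x) + K₁ᴴ * (x * K₁ - K₁ * x) := by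
    ext i j; fin_cases i <;> fin_cases j <;>
      simp [hK₀, hK₁, Matrix.mul_apply, Fin.sum_univ_succ, Matrix.vecMul,
        dotProduct, Matrix.vecHead, Matrix.vecTail] <;> ring
  set m := max ‖X * x - x * X‖ ‖Y * x - x * Y‖ with hm
  have hAm : ‖A‖ ≤ m := by
    rw [hA, ← neg_sub (X * x) (x * X), norm_neg]
    exact le_max_left _ _
  have hBm : ‖B‖ ≤ m := by
    rw [hB, ← neg_sub (Y * x) (x * Y), norm_neg]
    exact le_max_right _ _
  have hI2 : ‖Complex.I / 2‖ = 1 / 2 := by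
    rw [norm_div, Complex.norm_I]
    norm_num
  have hC0n : ‖x * K₀ - K₀ * x‖ ≤ m := by
    rw [hC0, norm_smul, hI2]
    have h1 : ‖X * B + A * Y‖ ≤ ‖X‖ * ‖B‖ + ‖A‖ * ‖Y‖ :=
      le_trans (norm_add_le _ _) (add_le_add (norm_mul_le _ _) (norm_mul_le _ _))
    rw [nX, nY] at h1
    calc (1/2 : ℝ) * ‖X * B + A * Y‖ ≤ (1/2) * (1 * ‖B‖ + ‖A‖ * 1) := by
          apply mul_le_mul_of_nonneg_left h1; norm_num
      _ ≤ m := by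
          have h0 : (0:ℝ) ≤ m := le_trans (norm_nonneg B) hBm
          nlinarith
  have hC1n : ‖x * K₁ - K₁ * x‖ ≤ m := by
    rw [hC1, norm_smul]
    have h1 : ‖A - Complex.I • B‖ ≤ ‖A‖ + ‖B‖ := by
      calc ‖A - Complex.I • B‖ ≤ ‖A‖ + ‖Complex.I • B‖ := norm_sub_le _ _
        _ = ‖A‖ + ‖B‖ := by rw [norm_smul, Complex.norm_I, one_mul]
    have hn : ‖(1/2 : ℂ)‖ = 1/2 := by norm_num
    rw [hn]
    nlinarith
  have hfin : ‖K₀ᴴ * (x * K₀ - K₀ * x) + K₁ᴴ * (x * K₁ - K₁ * x)‖ ≤ 2 * m := by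
    calc ‖K₀ᴴ * (x * K₀ - K₀ * x) + K₁ᴴ * (x * K₁ - K₁ * x)‖
        ≤ ‖K₀ᴴ‖ * ‖x * K₀ - K₀ * x‖ + ‖K₁ᴴ‖ * ‖x * K₁ - K₁ * x‖ :=
          le_trans (norm_add_le _ _) (add_le_add (norm_mul_le _ _) (norm_mul_le _ _))
      _ = ‖x * K₀ - K₀ * x‖ + ‖x * K₁ - K₁ * x‖ := by rw [nK₀H, nK₁H]; ring
      _ ≤ 2 * m := by linarith
  rw [hsum]
  exact hfin
end

section
/- On the n-qubit system, let X_j, Y_j denote single-site Pauli operators and S = {X_j, Y_j : 1 ≤ j ≤ n}. Then the operator x = Σ_{j=1}^n X_j satisfies ‖x‖_∞ = n while ‖|x|‖_S := sup_{s∈S} ‖[s,x]‖_∞ = 2. Consequently, for the maximally mixed replacer channel Φ₂(ρ) = Tr(ρ)·I/2ⁿ, the Lipschitz complexity C_S(Φ₂) is at least n/2. -/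
open scoped Matrix.Norms.L2Operator

/-- The single-site Pauli `X` operator on qubit `j` of an `n`-qubit system. -/
noncomputable def pauliX (n : ℕ) (j : Fin n) :
    Matrix (Fin n → Fin 2) (Fin n → Fin 2) ℂ :=
  Matrix.of fun f g => if f j ≠ g j ∧ ∀ i, i ≠ j → f i = g i then 1 else 0

/-- The single-site Pauli `Y` operator on qubit `j` of an `n`-qubit system
(with the convention `Y = [[0, i], [-i, 0]]`). -/
noncomputable def pauliY (n : ℕ) (j : Fin n) :
    Matrix (Fin n → Fin 2) (Fin n → Fin 2) ℂ :=
  Matrix.of fun f g =>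
    if f j = 0 ∧ g j = 1 ∧ ∀ i, i ≠ j → f i = g i then Complex.I
    else if f j = 1 ∧ g j = 0 ∧ ∀ i, i ≠ j → f i = g i then -Complex.I else 0

open Matrix

variable {Q : Type*} [Fintype Q] [DecidableEq Q]

/-- Apply a matrix as CLM on Euclidean space. -/
lemma clm_apply (A : Matrix Q Q ℂ) (v : EuclideanSpace ℂ Q) :
    (toEuclideanLin (𝕜 := ℂ) (m := Q) (n := Q)).trans LinearMap.toContinuousLinearMap A v
      = (WithLp.equiv 2 (Q → ℂ)).symm (A *ᵥ (WithLp.equiv 2 (Q → ℂ) v)) := by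
  rfl

lemma opnorm_le_bound (A : Matrix Q Q ℂ) {C : ℝ} (hC : 0 ≤ C)
    (h : ∀ v : EuclideanSpace ℂ Q,
      ‖((WithLp.equiv 2 (Q → ℂ)).symm (A *ᵥ (WithLp.equiv 2 (Q → ℂ) v)) : EuclideanSpace ℂ Q)‖
        ≤ C * ‖v‖) : ‖A‖ ≤ C := by
  rw [Matrix.l2_opNorm_def]
  exact ContinuousLinearMap.opNorm_le_bound _ hC (fun v => by rw [clm_apply]; exact h v)

lemma mulVec_le (A : Matrix Q Q ℂ) (v : EuclideanSpace ℂ Q) :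
    ‖((WithLp.equiv 2 (Q → ℂ)).symm (A *ᵥ (WithLp.equiv 2 (Q → ℂ) v)) : EuclideanSpace ℂ Q)‖
      ≤ ‖A‖ * ‖v‖ := by
  simpa using A.l2_opNorm_mulVec v

lemma coord_le (w : EuclideanSpace ℂ Q) (f : Q) : ‖w f‖ ≤ ‖w‖ := by
  rw [EuclideanSpace.norm_eq, show ‖w f‖ = Real.sqrt (‖w f‖^2) by rw [Real.sqrt_sq (norm_nonneg _)]]
  apply Real.sqrt_le_sqrt
  exact Finset.single_le_sum (f := fun i => ‖w i‖^2) (fun i _ => sq_nonneg _) (Finset.mem_univ f)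

lemma entry_le (A : Matrix Q Q ℂ) (f g : Q) : ‖A f g‖ ≤ ‖A‖ := by
  have h := mulVec_le A ((WithLp.equiv 2 (Q → ℂ)).symm (Pi.single g 1))
  rw [show (WithLp.equiv 2 (Q → ℂ)) ((WithLp.equiv 2 (Q → ℂ)).symm (Pi.single g 1)) = Pi.single g 1 from rfl] at h
  have h2 : ‖((WithLp.equiv 2 (Q → ℂ)).symm (Pi.single g (1:ℂ)) : EuclideanSpace ℂ Q)‖ = 1 := by
    simpa using EuclideanSpace.norm_single (𝕜 := ℂ) g 1
  rw [h2, mul_one] at h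
  calc ‖A f g‖ = ‖((WithLp.equiv 2 (Q → ℂ)).symm (A *ᵥ Pi.single g 1) : EuclideanSpace ℂ Q) f‖ := by
        simp [Matrix.mulVec_single]
    _ ≤ _ := le_trans (coord_le _ f) h

lemma norm_stdBasisMatrix_le (f g : Q) (c : ℂ) : ‖single f g c‖ ≤ ‖c‖ := by
  apply opnorm_le_bound _ (norm_nonneg c)
  intro v
  have hmv : single f g c *ᵥ (WithLp.equiv 2 (Q → ℂ) v)
      = Pi.single f (c * (WithLp.equiv 2 (Q → ℂ) v) g) := by
    ext i
    simp [Matrix.mulVec, Matrix.single, dotProduct, Pi.single_apply,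
      ite_and, mul_comm, eq_comm]
  rw [hmv]
  have : ‖((WithLp.equiv 2 (Q → ℂ)).symm (Pi.single f (c * (WithLp.equiv 2 (Q → ℂ) v) g)) :
      EuclideanSpace ℂ Q)‖ = ‖c * v g‖ := by
    simpa using EuclideanSpace.norm_single (𝕜 := ℂ) f (c * v g)
  rw [this, norm_mul]
  exact mul_le_mul_of_nonneg_left (coord_le v g) (norm_nonneg c)

lemma opnorm_le_sum_entries (A : Matrix Q Q ℂ) : ‖A‖ ≤ ∑ f : Q, ∑ g : Q, ‖A f g‖ := by
  conv_lhs => rw [Matrix.matrix_eq_sum_single A]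
  refine le_trans (norm_sum_le _ _) (Finset.sum_le_sum fun f _ => ?_)
  exact le_trans (norm_sum_le _ _) (Finset.sum_le_sum fun g _ => norm_stdBasisMatrix_le f g _)

lemma norm_one_mat [Nonempty Q] : ‖(1 : Matrix Q Q ℂ)‖ = 1 := by
  refine le_antisymm (opnorm_le_bound _ zero_le_one fun v => by simp [Matrix.one_mulVec]) ?_
  obtain ⟨f⟩ := ‹Nonempty Q›
  simpa using entry_le (1 : Matrix Q Q ℂ) f f
def flipb : Fin 2 → Fin 2 := ![1, 0]

lemma flipb_ne (b : Fin 2) : flipb b ≠ b := by revert b; decide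
lemma flipb_flipb (b : Fin 2) : flipb (flipb b) = b := by revert b; decide
lemma ne_iff_eq_flipb (a b : Fin 2) : a ≠ b ↔ a = flipb b := by revert a b; decide

def flipAt {n : ℕ} (f : Fin n → Fin 2) (j : Fin n) : Fin n → Fin 2 :=
  Function.update f j (flipb (f j))

lemma flipAt_apply_self {n : ℕ} (f : Fin n → Fin 2) (j : Fin n) :
    flipAt f j j = flipb (f j) := by simp [flipAt]

lemma flipAt_apply_ne {n : ℕ} (f : Fin n → Fin 2) {j i : Fin n} (h : i ≠ j) :
    flipAt f j i = f i := by simp [flipAt, Function.update_of_ne h]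

lemma flipAt_flipAt {n : ℕ} (f : Fin n → Fin 2) (j : Fin n) :
    flipAt (flipAt f j) j = f := by
  funext i
  rcases eq_or_ne i j with rfl | h
  · simp [flipAt_apply_self, flipb_flipb]
  · simp [flipAt_apply_ne _ h]

lemma flipAt_ne {n : ℕ} (f : Fin n → Fin 2) (j : Fin n) : flipAt f j ≠ f := by
  intro h
  exact flipb_ne (f j) (by rw [← flipAt_apply_self f j, h])

lemma eq_flipAt_iff {n : ℕ} (f g : Fin n → Fin 2) (j : Fin n) :
    g = flipAt f j ↔ flipAt g j = f := by
  constructor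
  · rintro rfl; exact flipAt_flipAt f j
  · rintro rfl; exact (flipAt_flipAt g j).symm

lemma pauliX_entry {n : ℕ} (j : Fin n) (f g : Fin n → Fin 2) :
    pauliX n j f g = if g = flipAt f j then 1 else 0 := by
  have : (f j ≠ g j ∧ ∀ i, i ≠ j → f i = g i) ↔ g = flipAt f j := by
    constructor
    · rintro ⟨h1, h2⟩
      funext i
      rcases eq_or_ne i j with rfl | h
      · rw [flipAt_apply_self, ← ne_iff_eq_flipb]; exact h1.symm
      · rw [flipAt_apply_ne _ h]; exact (h2 i h).symm
    · rintro rfl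
      refine ⟨?_, fun i h => (flipAt_apply_ne _ h).symm⟩
      rw [flipAt_apply_self]
      exact fun h => flipb_ne (f j) h.symm
  simp only [pauliX, Matrix.of_apply, this]

lemma eq_flipAt_of {n : ℕ} {f g : Fin n → Fin 2} {j : Fin n}
    (h1 : g j = flipb (f j)) (h2 : ∀ i, i ≠ j → f i = g i) : g = flipAt f j := by
  funext i
  rcases eq_or_ne i j with rfl | h
  · rw [flipAt_apply_self]; exact h1
  · rw [flipAt_apply_ne _ h]; exact (h2 i h).symm

lemma pauliY_entry {n : ℕ} (j : Fin n) (f g : Fin n → Fin 2) :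
    pauliY n j f g = if g = flipAt f j
      then (if f j = 0 then Complex.I else -Complex.I) else 0 := by
  have c1 : (f j = 0 ∧ g j = 1 ∧ ∀ i, i ≠ j → f i = g i) ↔ (g = flipAt f j ∧ f j = 0) := by
    constructor
    · rintro ⟨a, b, c⟩; exact ⟨eq_flipAt_of (by rw [b, a]; decide) c, a⟩
    · rintro ⟨rfl, a⟩
      exact ⟨a, by rw [flipAt_apply_self, a]; decide, fun i hi => (flipAt_apply_ne _ hi).symm⟩
  have c2 : (f j = 1 ∧ g j = 0 ∧ ∀ i, i ≠ j → f i = g i) ↔ (g = flipAt f j ∧ f j = 1) := by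
    constructor
    · rintro ⟨a, b, c⟩; exact ⟨eq_flipAt_of (by rw [b, a]; decide) c, a⟩
    · rintro ⟨rfl, a⟩
      exact ⟨a, by rw [flipAt_apply_self, a]; decide, fun i hi => (flipAt_apply_ne _ hi).symm⟩
  simp only [pauliY, Matrix.of_apply, c1, c2]
  by_cases h : g = flipAt f j
  · rcases (by decide : ∀ b : Fin 2, b = 0 ∨ b = 1) (f j) with h0 | h1
    · simp [h, h0]
    · simp [h, h1, (by decide : (1 : Fin 2) ≠ 0)]
  · simp [h]

lemma flipAt_eq_comm {n : ℕ} (f g : Fin n → Fin 2) (j : Fin n) :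
    (g = flipAt f j) ↔ (f = flipAt g j) := by
  rw [eq_flipAt_iff, eq_comm]

lemma pauliX_mul {n : ℕ} (j : Fin n) (A : Matrix (Fin n → Fin 2) (Fin n → Fin 2) ℂ)
    (f g : Fin n → Fin 2) : (pauliX n j * A) f g = A (flipAt f j) g := by
  simp [Matrix.mul_apply, pauliX_entry, ite_mul, Finset.sum_ite_eq']

lemma mul_pauliX {n : ℕ} (j : Fin n) (A : Matrix (Fin n → Fin 2) (Fin n → Fin 2) ℂ)
    (f g : Fin n → Fin 2) : (A * pauliX n j) f g = A f (flipAt g j) := by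
  have : ∀ h : Fin n → Fin 2, (g = flipAt h j) ↔ (h = flipAt g j) := by
    intro h; exact flipAt_eq_comm h g j
  simp [Matrix.mul_apply, pauliX_entry, this, mul_ite, Finset.sum_ite_eq']

lemma pauliY_mul {n : ℕ} (j : Fin n) (A : Matrix (Fin n → Fin 2) (Fin n → Fin 2) ℂ)
    (f g : Fin n → Fin 2) :
    (pauliY n j * A) f g = (if f j = 0 then Complex.I else -Complex.I) * A (flipAt f j) g := by
  simp [Matrix.mul_apply, pauliY_entry, ite_mul, Finset.sum_ite_eq']

lemma mul_pauliY {n : ℕ} (j : Fin n) (A : Matrix (Fin n → Fin 2) (Fin n → Fin 2) ℂ)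
    (f g : Fin n → Fin 2) :
    (A * pauliY n j) f g
      = A f (flipAt g j) * (if g j = 0 then -Complex.I else Complex.I) := by
  have key : ∀ h : Fin n → Fin 2, (g = flipAt h j) ↔ (h = flipAt g j) := by
    intro h; exact flipAt_eq_comm h g j
  have hcoef : (if flipAt g j j = 0 then Complex.I else -Complex.I)
      = (if g j = 0 then -Complex.I else Complex.I) := by
    rw [flipAt_apply_self]
    rcases (by decide : ∀ b : Fin 2, b = 0 ∨ b = 1) (g j) with h0 | h1
    · rw [h0, if_neg (by decide), if_pos rfl]
    · rw [h1, if_pos (by decide), if_neg (by decide)]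
  calc (A * pauliY n j) f g
      = ∑ h, A f h * (if h = flipAt g j then (if h j = 0 then Complex.I else -Complex.I) else 0) := by
        simp only [Matrix.mul_apply, pauliY_entry, key]
    _ = A f (flipAt g j) * (if flipAt g j j = 0 then Complex.I else -Complex.I) := by
        rw [Finset.sum_eq_single (flipAt g j)]
        · rw [if_pos rfl]
        · intro b _ hb; rw [if_neg hb, mul_zero]
        · intro habs; exact absurd (Finset.mem_univ _) habs
    _ = _ := by rw [hcoef]
section Layer3
variable {n : ℕ} (j : Fin n)

local notation "Qn" => (Fin n → Fin 2)

lemma flipAt_comm (f : Qn) (i j : Fin n) :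
    flipAt (flipAt f j) i = flipAt (flipAt f i) j := by
  rcases eq_or_ne i j with rfl | hij
  · rfl
  · funext k
    rcases eq_or_ne k i with rfl | hki
    · have hkj : k ≠ j := fun h => hij (h ▸ rfl)
      rw [flipAt_apply_self, flipAt_apply_ne _ hkj, flipAt_apply_ne _ hkj, flipAt_apply_self]
    · rcases eq_or_ne k j with rfl | hkj
      · rw [flipAt_apply_ne _ hki, flipAt_apply_self, flipAt_apply_self, flipAt_apply_ne _ hki]
      · rw [flipAt_apply_ne _ hki, flipAt_apply_ne _ hkj, flipAt_apply_ne _ hkj,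
          flipAt_apply_ne _ hki]

lemma pauliX_conjTranspose : (pauliX n j)ᴴ = pauliX n j := by
  ext f g
  have hsymm : (pauliX n j) g f = (pauliX n j) f g := by
    rw [pauliX_entry, pauliX_entry]
    exact if_congr (flipAt_eq_comm g f j) rfl rfl
  rw [Matrix.conjTranspose_apply, hsymm, pauliX_entry]
  split <;> simp

lemma pauliX_mul_self : pauliX n j * pauliX n j = 1 := by
  ext f g
  rw [pauliX_mul, pauliX_entry, flipAt_flipAt, Matrix.one_apply]
  exact if_congr eq_comm rfl rfl

lemma norm_pauliX : ‖pauliX n j‖ = 1 := by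
  have h := Matrix.l2_opNorm_conjTranspose_mul_self (pauliX n j)
  rw [pauliX_conjTranspose, pauliX_mul_self, norm_one_mat] at h
  nlinarith [norm_nonneg (pauliX n j)]

lemma trace_pauliX : Matrix.trace (pauliX n j) = 0 := by
  rw [Matrix.trace]
  refine Finset.sum_eq_zero fun f _ => ?_
  rw [Matrix.diag_apply, pauliX_entry, if_neg (fun h => flipAt_ne f j h.symm)]

lemma pauliX_comm (i : Fin n) : pauliX n j * pauliX n i = pauliX n i * pauliX n j := by
  ext f g
  rw [pauliX_mul, mul_pauliX, pauliX_entry, pauliX_entry]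
  exact if_congr (by rw [flipAt_comm]; exact eq_flipAt_iff _ _ _) rfl rfl

lemma pauliY_pauliX_comm (i : Fin n) (hij : i ≠ j) :
    pauliY n j * pauliX n i = pauliX n i * pauliY n j := by
  ext f g
  rw [pauliY_mul, mul_pauliY, pauliX_entry, pauliX_entry]
  by_cases hcond : g = flipAt (flipAt f j) i
  · have hcond' : flipAt g j = flipAt f i := by
      rw [← eq_flipAt_iff, ← flipAt_comm]; exact hcond
    have hgj : g j = flipb (f j) := by
      rw [hcond, flipAt_apply_ne _ (Ne.symm hij), flipAt_apply_self]
    rw [if_pos hcond, if_pos hcond', mul_one, one_mul, hgj]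
    rcases (by decide : ∀ b : Fin 2, b = 0 ∨ b = 1) (f j) with h0 | h0 <;> rw [h0]
    · rw [if_pos rfl, if_neg (by decide)]
    · rw [if_neg (by decide), if_pos (by decide)]
  · have hcond' : ¬ (flipAt g j = flipAt f i) := fun h => hcond (by
      rw [flipAt_comm]; exact (eq_flipAt_iff _ _ _).2 h)
    rw [if_neg hcond, if_neg hcond', mul_zero, zero_mul]

/-- The commutator `[Y_j, X_j]` as a diagonal matrix. -/
lemma pauliY_mul_pauliX_sub :
    pauliY n j * pauliX n j - pauliX n j * pauliY n j
      = Matrix.diagonal (fun f : Qn =>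
          if f j = 0 then 2 * Complex.I else -(2 * Complex.I)) := by
  ext f g
  rw [Matrix.sub_apply, pauliY_mul, pauliX_mul, pauliX_entry, pauliY_entry,
    flipAt_flipAt, Matrix.diagonal_apply]
  by_cases h : g = f
  · subst h
    rw [if_pos rfl, if_pos rfl, if_pos rfl, mul_one, flipAt_apply_self]
    rcases (by decide : ∀ b : Fin 2, b = 0 ∨ b = 1) (g j) with h0 | h0 <;> rw [h0]
    · rw [if_pos rfl, if_neg (by decide), if_pos rfl]; ring
    · rw [if_neg (by decide), if_pos (by decide), if_neg (by decide)]; ring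
  · rw [if_neg h, if_neg h, if_neg (Ne.symm h), mul_zero, sub_zero]

lemma norm_comm_YX : ‖pauliY n j * pauliX n j - pauliX n j * pauliY n j‖ = 2 := by
  set M := pauliY n j * pauliX n j - pauliX n j * pauliY n j with hM
  have hdiag := pauliY_mul_pauliX_sub j
  have hMM : Mᴴ * M = (4 : ℂ) • (1 : Matrix Qn Qn ℂ) := by
    rw [hM, hdiag, Matrix.diagonal_conjTranspose, Matrix.diagonal_mul_diagonal]
    ext f g
    simp only [Matrix.diagonal_apply, Pi.star_apply, Matrix.smul_apply, Matrix.one_apply,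
      smul_eq_mul]
    by_cases h : f = g
    · rw [if_pos h, if_pos h, mul_one]
      split <;> · simp [Complex.ext_iff]; norm_num
    · rw [if_neg h, if_neg h, mul_zero]
  have h := Matrix.l2_opNorm_conjTranspose_mul_self M
  rw [hMM] at h
  have h4 : ‖(4 : ℂ) • (1 : Matrix Qn Qn ℂ)‖ = 4 := by
    rw [norm_smul, norm_one_mat, mul_one]
    simp
  rw [h4] at h
  nlinarith [norm_nonneg M]

end Layer3
section Layer4
variable {n : ℕ}

local notation "Qn" => (Fin n → Fin 2)

lemma commX_sum (j : Fin n) :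
    pauliX n j * (∑ i : Fin n, pauliX n i) - (∑ i : Fin n, pauliX n i) * pauliX n j = 0 := by
  rw [Finset.mul_sum, Finset.sum_mul, ← Finset.sum_sub_distrib]
  exact Finset.sum_eq_zero fun i _ => by rw [pauliX_comm]; exact sub_self _

lemma commY_sum (j : Fin n) :
    pauliY n j * (∑ i : Fin n, pauliX n i) - (∑ i : Fin n, pauliX n i) * pauliY n j
      = pauliY n j * pauliX n j - pauliX n j * pauliY n j := by
  rw [Finset.mul_sum, Finset.sum_mul, ← Finset.sum_sub_distrib]
  rw [Finset.sum_eq_single j]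
  · intro i _ hij
    rw [pauliY_pauliX_comm j i hij]
    exact sub_self _
  · intro h
    exact absurd (Finset.mem_univ _) h

lemma norm_sum_pauliX : ‖∑ i : Fin n, pauliX n i‖ = n := by
  apply le_antisymm
  · calc ‖∑ i : Fin n, pauliX n i‖ ≤ ∑ i : Fin n, ‖pauliX n i‖ := norm_sum_le _ _
      _ = n := by simp [norm_pauliX]
  · set A := ∑ i : Fin n, pauliX n i with hA
    set v : EuclideanSpace ℂ Qn := (WithLp.equiv 2 (Qn → ℂ)).symm (fun _ => 1) with hv
    have hvcoord : ∀ f : Qn, v f = 1 := fun f => rfl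
    have hvpos : 0 < ‖v‖ := by
      have h1 : (1 : ℝ) ≤ ‖v‖ := by
        have := coord_le v (fun _ => 0)
        rwa [hvcoord, norm_one] at this
      linarith
    have hmv : A *ᵥ (fun _ => (1 : ℂ)) = fun _ => (n : ℂ) := by
      funext f
      show ∑ g, A f g * 1 = (n : ℂ)
      simp only [mul_one, hA, Matrix.sum_apply, pauliX_entry]
      rw [Finset.sum_comm]
      simp [Finset.sum_ite_eq']
    have hle := mulVec_le A v
    have hveq : (WithLp.equiv 2 (Qn → ℂ)) v = fun _ => (1 : ℂ) := rfl
    rw [hveq, hmv] at hle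
    have hsmul : ((WithLp.equiv 2 (Qn → ℂ)).symm (fun _ => (n : ℂ)) : EuclideanSpace ℂ Qn)
        = (n : ℂ) • v := by
      ext f
      show (n : ℂ) = (n : ℂ) * v f
      rw [hvcoord, mul_one]
    rw [hsmul, norm_smul] at hle
    have : ‖(n : ℂ)‖ = (n : ℝ) := by simp
    rw [this] at hle
    exact le_of_mul_le_mul_right hle hvpos

lemma trace_sum_pauliX : Matrix.trace (∑ i : Fin n, pauliX n i) = 0 := by
  rw [Matrix.trace_sum]
  simp [trace_pauliX]

lemma part2 (hn : 1 ≤ n) :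
    (⨆ j : Fin n,
        max ‖pauliX n j * (∑ i : Fin n, pauliX n i) - (∑ i : Fin n, pauliX n i) * pauliX n j‖
            ‖pauliY n j * (∑ i : Fin n, pauliX n i) - (∑ i : Fin n, pauliX n i) * pauliY n j‖)
      = 2 := by
  haveI : Nonempty (Fin n) := Fin.pos_iff_nonempty.1 hn
  have h : ∀ j : Fin n,
      max ‖pauliX n j * (∑ i : Fin n, pauliX n i) - (∑ i : Fin n, pauliX n i) * pauliX n j‖
          ‖pauliY n j * (∑ i : Fin n, pauliX n i) - (∑ i : Fin n, pauliX n i) * pauliY n j‖ = 2 := by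
    intro j
    rw [commX_sum, commY_sum, norm_zero, norm_comm_YX]
    exact max_eq_right (by norm_num)
  simp only [h, ciSup_const]

end Layer4
section Layer5
variable {n : ℕ}

local notation "Qn" => (Fin n → Fin 2)

lemma offdiag_bound (x : Matrix Qn Qn ℂ)
    (hX : ∀ j, ‖pauliX n j * x - x * pauliX n j‖ ≤ 1)
    (hY : ∀ j, ‖pauliY n j * x - x * pauliY n j‖ ≤ 1)
    {f g : Qn} (hfg : f ≠ g) : ‖x f g‖ ≤ 1 := by
  obtain ⟨j, hj⟩ : ∃ j, f j ≠ g j := by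
    by_contra h
    push_neg at h
    exact hfg (funext h)
  have hgj : g j = flipb (f j) := (ne_iff_eq_flipb _ _).1 (Ne.symm hj)
  set f' := flipAt f j with hf'
  set g' := flipAt g j with hg'
  have hf'j : f' j = g j := by rw [hf', flipAt_apply_self, hgj]
  have E1 : ‖x f g - x f' g'‖ ≤ 1 := by
    have h := entry_le (pauliX n j * x - x * pauliX n j) f' g
    rw [Matrix.sub_apply, pauliX_mul, mul_pauliX, hf', flipAt_flipAt] at h
    exact le_trans h (hX j)
  have E2 : ‖x f g + x f' g'‖ ≤ 1 := by
    have h := entry_le (pauliY n j * x - x * pauliY n j) f' g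
    rw [Matrix.sub_apply, pauliY_mul, mul_pauliY, hf', flipAt_flipAt, ← hf', hf'j] at h
    rcases (by decide : ∀ b : Fin 2, b = 0 ∨ b = 1) (g j) with h0 | h0 <;> rw [h0] at h
    · rw [if_pos rfl, if_pos rfl] at h
      have : Complex.I * x f g - x f' g' * -Complex.I
          = Complex.I * (x f g + x f' g') := by ring
      rw [this, norm_mul, Complex.norm_I, one_mul] at h
      exact le_trans h (hY j)
    · rw [if_neg (by decide), if_neg (by decide)] at h
      have : -Complex.I * x f g - x f' g' * Complex.I
          = -(Complex.I * (x f g + x f' g')) := by ring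
      rw [this, norm_neg, norm_mul, Complex.norm_I, one_mul] at h
      exact le_trans h (hY j)
  have h2 : ‖(2 : ℂ) * x f g‖ ≤ 2 := by
    have : (2 : ℂ) * x f g = (x f g - x f' g') + (x f g + x f' g') := by ring
    rw [this]
    calc ‖(x f g - x f' g') + (x f g + x f' g')‖
        ≤ ‖x f g - x f' g'‖ + ‖x f g + x f' g'‖ := norm_add_le _ _
      _ ≤ 2 := by linarith
  rw [norm_mul] at h2
  have h2' : ‖(2 : ℂ)‖ = 2 := by simp
  rw [h2'] at h2
  linarith

lemma diag_flip_bound (x : Matrix Qn Qn ℂ)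
    (hX : ∀ j, ‖pauliX n j * x - x * pauliX n j‖ ≤ 1) (f : Qn) (j : Fin n) :
    ‖x (flipAt f j) (flipAt f j) - x f f‖ ≤ 1 := by
  have h := entry_le (pauliX n j * x - x * pauliX n j) f (flipAt f j)
  rw [Matrix.sub_apply, pauliX_mul, mul_pauliX, flipAt_flipAt] at h
  exact le_trans h (hX j)

lemma diag_pair_bound (x : Matrix Qn Qn ℂ)
    (hX : ∀ j, ‖pauliX n j * x - x * pauliX n j‖ ≤ 1) (f g : Qn) :
    ‖x f f - x g g‖ ≤ n := by
  suffices H : ∀ s : Finset (Fin n), ∀ f g : Qn, (∀ i, i ∉ s → f i = g i) →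
      ‖x f f - x g g‖ ≤ s.card by
    have := H Finset.univ f g (fun i hi => absurd (Finset.mem_univ i) hi)
    simpa using this
  intro s
  induction s using Finset.induction_on with
  | empty =>
    intro f g hfg
    have : f = g := funext fun i => hfg i (Finset.notMem_empty i)
    simp [this]
  | @insert a s ha ih =>
    intro f g hfg
    by_cases hfa : f a = g a
    · have : ‖x f f - x g g‖ ≤ s.card := by
        refine ih f g fun i hi => ?_
        rcases eq_or_ne i a with rfl | hia
        · exact hfa
        · exact hfg i (by simp [hia, hi])
      calc ‖x f f - x g g‖ ≤ (s.card : ℝ) := this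
        _ ≤ ((insert a s).card : ℝ) := by
            rw [Finset.card_insert_of_notMem ha]; push_cast; linarith
    · set f' := flipAt f a with hf'
      have hf'g : ∀ i, i ∉ s → f' i = g i := by
        intro i hi
        rcases eq_or_ne i a with rfl | hia
        · rw [hf', flipAt_apply_self]
          exact ((ne_iff_eq_flipb _ _).1 (Ne.symm hfa)).symm
        · rw [hf', flipAt_apply_ne _ hia]
          exact hfg i (by simp [hia, hi])
      have h1 : ‖x f f - x f' f'‖ ≤ 1 := by
        rw [norm_sub_rev]
        exact diag_flip_bound x hX f a
      have h2 : ‖x f' f' - x g g‖ ≤ s.card := ih f' g hf'g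
      calc ‖x f f - x g g‖ = ‖(x f f - x f' f') + (x f' f' - x g g)‖ := by congr 1; ring
        _ ≤ ‖x f f - x f' f'‖ + ‖x f' f' - x g g‖ := norm_add_le _ _
        _ ≤ 1 + s.card := by linarith
        _ = ((insert a s).card : ℝ) := by
            rw [Finset.card_insert_of_notMem ha]; push_cast; ring

lemma card_Qn : Fintype.card Qn = 2 ^ n := by
  simp [Fintype.card_fun]

lemma trace_diag_bound (x : Matrix Qn Qn ℂ)
    (hX : ∀ j, ‖pauliX n j * x - x * pauliX n j‖ ≤ 1) (f : Qn) :
    ‖Matrix.trace x / 2 ^ n - x f f‖ ≤ n := by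
  have h2n : ((2 : ℂ) ^ n) ≠ 0 := pow_ne_zero _ two_ne_zero
  have hsum : ∑ g : Qn, (x g g - x f f) = Matrix.trace x - 2 ^ n * x f f := by
    rw [Finset.sum_sub_distrib, Finset.sum_const, Matrix.trace]
    congr 1
    rw [Finset.card_univ, card_Qn]
    push_cast
    rw [nsmul_eq_mul]
    push_cast
    ring
  have key : Matrix.trace x / 2 ^ n - x f f = (∑ g : Qn, (x g g - x f f)) / 2 ^ n := by
    rw [hsum]
    field_simp
  rw [key, norm_div]
  have hnorm2n : ‖(2 : ℂ) ^ n‖ = (2 : ℝ) ^ n := by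
    rw [norm_pow]
    simp
  rw [hnorm2n]
  rw [div_le_iff₀ (by positivity)]
  calc ‖∑ g : Qn, (x g g - x f f)‖ ≤ ∑ g : Qn, ‖x g g - x f f‖ := norm_sum_le _ _
    _ ≤ ∑ _g : Qn, (n : ℝ) := Finset.sum_le_sum fun g _ => diag_pair_bound x hX g f
    _ = (2 : ℝ) ^ n * n := by
        rw [Finset.sum_const, Finset.card_univ, card_Qn, nsmul_eq_mul]
        push_cast
        ring
    _ = n * 2 ^ n := by ring

end Layer5

/-- On `n` qubits, `x = ∑ⱼ Xⱼ` has operator norm `n` and Lipschitz seminorm `2` with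
respect to `S = {Xⱼ, Yⱼ}`; hence the Lipschitz complexity of the maximally mixed
replacer channel `Φ₂(ρ) = Tr(ρ) I/2ⁿ` is at least `n/2`. -/
theorem pauli_sum_complexity (n : ℕ) (hn : 1 ≤ n) :
    ‖∑ j : Fin n, pauliX n j‖ = n ∧
    (⨆ j : Fin n,
        max ‖pauliX n j * (∑ i : Fin n, pauliX n i) - (∑ i : Fin n, pauliX n i) * pauliX n j‖
            ‖pauliY n j * (∑ i : Fin n, pauliX n i) - (∑ i : Fin n, pauliX n i) * pauliY n j‖)
      = 2 ∧
    (n : ℝ) / 2 ≤ sSup {c : ℝ | ∃ x : Matrix (Fin n → Fin 2) (Fin n → Fin 2) ℂ,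
        (⨆ j : Fin n, max ‖pauliX n j * x - x * pauliX n j‖ ‖pauliY n j * x - x * pauliY n j‖) ≤ 1 ∧
        c = ‖(Matrix.trace x / 2 ^ n) • (1 : Matrix (Fin n → Fin 2) (Fin n → Fin 2) ℂ) - x‖} := by
  haveI : Nonempty (Fin n) := Fin.pos_iff_nonempty.1 hn
  refine ⟨norm_sum_pauliX, part2 hn, ?_⟩
  have hbdd : BddAbove {c : ℝ | ∃ x : Matrix (Fin n → Fin 2) (Fin n → Fin 2) ℂ,
      (⨆ j : Fin n, max ‖pauliX n j * x - x * pauliX n j‖ ‖pauliY n j * x - x * pauliY n j‖) ≤ 1 ∧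
      c = ‖(Matrix.trace x / 2 ^ n) • (1 : Matrix (Fin n → Fin 2) (Fin n → Fin 2) ℂ) - x‖} := by
    refine ⟨(2 : ℝ) ^ n * 2 ^ n * n, ?_⟩
    rintro c ⟨x, hx, rfl⟩
    have hmax : ∀ j : Fin n,
        max ‖pauliX n j * x - x * pauliX n j‖ ‖pauliY n j * x - x * pauliY n j‖ ≤ 1 :=
      fun j => le_trans (le_ciSup (f := fun j : Fin n =>
        max ‖pauliX n j * x - x * pauliX n j‖ ‖pauliY n j * x - x * pauliY n j‖)
        (Set.Finite.bddAbove (Set.finite_range _)) j) hx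
    have hX : ∀ j, ‖pauliX n j * x - x * pauliX n j‖ ≤ 1 :=
      fun j => le_trans (le_max_left _ _) (hmax j)
    have hY : ∀ j, ‖pauliY n j * x - x * pauliY n j‖ ≤ 1 :=
      fun j => le_trans (le_max_right _ _) (hmax j)
    have hentry : ∀ f g : Fin n → Fin 2,
        ‖((Matrix.trace x / 2 ^ n) • (1 : Matrix (Fin n → Fin 2) (Fin n → Fin 2) ℂ) - x) f g‖
          ≤ n := by
      intro f g
      rw [Matrix.sub_apply, Matrix.smul_apply]
      rcases eq_or_ne f g with rfl | hfg
      · rw [Matrix.one_apply_eq, smul_eq_mul, mul_one]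
        exact trace_diag_bound x hX f
      · rw [Matrix.one_apply_ne hfg, smul_zero, zero_sub, norm_neg]
        exact le_trans (offdiag_bound x hX hY hfg) (by exact_mod_cast hn)
    calc ‖(Matrix.trace x / 2 ^ n) • (1 : Matrix (Fin n → Fin 2) (Fin n → Fin 2) ℂ) - x‖
        ≤ ∑ f : Fin n → Fin 2, ∑ g : Fin n → Fin 2,
            ‖((Matrix.trace x / 2 ^ n) • (1 : Matrix (Fin n → Fin 2) (Fin n → Fin 2) ℂ) - x) f g‖ :=
          opnorm_le_sum_entries _
      _ ≤ ∑ _f : Fin n → Fin 2, ∑ _g : Fin n → Fin 2, (n : ℝ) :=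
          Finset.sum_le_sum fun f _ => Finset.sum_le_sum fun g _ => hentry f g
      _ = (2 : ℝ) ^ n * 2 ^ n * n := by
          rw [Finset.sum_const, Finset.sum_const, Finset.card_univ, card_Qn, nsmul_eq_mul,
            nsmul_eq_mul]
          push_cast
          ring
  have hmem : (n : ℝ) / 2 ∈ {c : ℝ | ∃ x : Matrix (Fin n → Fin 2) (Fin n → Fin 2) ℂ,
      (⨆ j : Fin n, max ‖pauliX n j * x - x * pauliX n j‖ ‖pauliY n j * x - x * pauliY n j‖) ≤ 1 ∧
      c = ‖(Matrix.trace x / 2 ^ n) • (1 : Matrix (Fin n → Fin 2) (Fin n → Fin 2) ℂ) - x‖} := by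
    refine ⟨(2⁻¹ : ℂ) • ∑ i : Fin n, pauliX n i, ?_, ?_⟩
    · apply ciSup_le
      intro j
      have hXc : pauliX n j * ((2⁻¹ : ℂ) • ∑ i : Fin n, pauliX n i)
          - ((2⁻¹ : ℂ) • ∑ i : Fin n, pauliX n i) * pauliX n j
          = (2⁻¹ : ℂ) • (pauliX n j * (∑ i : Fin n, pauliX n i)
              - (∑ i : Fin n, pauliX n i) * pauliX n j) := by
        rw [mul_smul_comm, smul_mul_assoc, smul_sub]
      have hYc : pauliY n j * ((2⁻¹ : ℂ) • ∑ i : Fin n, pauliX n i)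
          - ((2⁻¹ : ℂ) • ∑ i : Fin n, pauliX n i) * pauliY n j
          = (2⁻¹ : ℂ) • (pauliY n j * (∑ i : Fin n, pauliX n i)
              - (∑ i : Fin n, pauliX n i) * pauliY n j) := by
        rw [mul_smul_comm, smul_mul_assoc, smul_sub]
      rw [hXc, hYc, commX_sum, commY_sum, smul_zero, norm_zero, norm_smul, norm_comm_YX]
      have : ‖(2⁻¹ : ℂ)‖ = 2⁻¹ := by simp
      rw [this]
      apply max_le (by norm_num) (by norm_num)
    · have htr : Matrix.trace ((2⁻¹ : ℂ) • ∑ i : Fin n, pauliX n i) = 0 := by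
        rw [Matrix.trace_smul, trace_sum_pauliX, smul_zero]
      rw [htr, zero_div, zero_smul, zero_sub, norm_neg, norm_smul, norm_sum_pauliX]
      have : ‖(2⁻¹ : ℂ)‖ = 2⁻¹ := by simp
      rw [this]
      ring
  exact le_csSup hbdd hmem
end

section
/- Let Φ be a linear contraction (‖Φ^k‖ ≤ 1 for all k), T_t = e^{-t}Σ_{k≥0}(t^k/k!)Φ^k, and for N ≥ 1 define the truncation T_t^{[N]} = (Σ_{k=0}^N t^k e^{-t}/k!)^{-1} Σ_{k=0}^N (t^k e^{-t}/k!) Φ^k. Then for 0 < t < N+1, ‖T_t - T_t^{[N]}‖ ≤ 2·exp(N+1 - t - (N+1)·ln((N+1)/t)). -/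
open scoped Nat

/-- Error of the truncated Poisson mixture: if `‖Φ^k‖ ≤ 1` for all `k`,
`T_t = e^{-t} ∑_{k≥0} (t^k/k!) Φ^k` and `T_t^{[N]}` is its renormalized truncation at
order `N`, then for `0 < t < N+1`,
`‖T_t - T_t^{[N]}‖ ≤ 2 exp(N+1 - t - (N+1) log((N+1)/t))`. -/
theorem poisson_truncation_error {E : Type*} [NormedAddCommGroup E] [NormedSpace ℝ E]
    [CompleteSpace E]
    (Φ : E →L[ℝ] E) (hΦ : ∀ k : ℕ, ‖Φ ^ k‖ ≤ 1)
    (N : ℕ) (hN : 1 ≤ N) (t : ℝ) (ht0 : 0 < t) (htN : t < N + 1) :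
    ‖(∑' k : ℕ, (Real.exp (-t) * t ^ k / (k ! : ℝ)) • Φ ^ k) -
        (∑ k ∈ Finset.range (N + 1), Real.exp (-t) * t ^ k / (k ! : ℝ))⁻¹ •
          ∑ k ∈ Finset.range (N + 1), (Real.exp (-t) * t ^ k / (k ! : ℝ)) • Φ ^ k‖ ≤
      2 * Real.exp ((N + 1 : ℝ) - t - (N + 1) * Real.log ((N + 1) / t)) := by
  set M : ℕ := N + 1 with hMdef
  have hM0 : (0:ℝ) < (M : ℝ) := by positivity
  have htM : t < (M : ℝ) := by push_cast [hMdef]; linarith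
  set f : ℕ → ℝ := fun k => Real.exp (-t) * t ^ k / (k ! : ℝ) with hfdef
  have hf0 : ∀ k, 0 ≤ f k := fun k => by positivity
  have hfs : Summable f := by
    have h := (Real.summable_pow_div_factorial t).mul_left (Real.exp (-t))
    simpa [hfdef, mul_div_assoc] using h
  have hexp : ∀ x : ℝ, ∑' n : ℕ, x ^ n / (n ! : ℝ) = Real.exp x := by
    intro x
    rw [Real.exp_eq_exp_ℝ, NormedSpace.exp_eq_tsum_div]
  have hsum : ∑' k, f k = 1 := by
    have : ∑' k, f k = Real.exp (-t) * ∑' k : ℕ, t ^ k / (k ! : ℝ) := by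
      rw [← tsum_mul_left]; simp [hfdef, mul_div_assoc]
    rw [this, hexp, ← Real.exp_add]
    simp
  set S : ℝ := ∑ k ∈ Finset.range M, f k with hSdef
  set τ : ℝ := ∑' k, f (k + M) with hτdef
  have hSτ : S + τ = 1 := by
    rw [hSdef, hτdef, Summable.sum_add_tsum_nat_add M hfs, hsum]
  have hτ0 : 0 ≤ τ :=
    tsum_nonneg fun k => hf0 _
  have hS1 : S ≤ 1 := by linarith
  have hSpos : 0 < S := by
    refine Finset.sum_pos' (fun k _ => hf0 k) ⟨0, Finset.mem_range.2 (Nat.succ_pos N), ?_⟩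
    simp only [hfdef]
    positivity
  -- Tail bound: τ ≤ A where A = exp(M - t - M log(M/t))
  set A : ℝ := Real.exp ((M : ℝ) - t - (M : ℝ) * Real.log ((M : ℝ) / t)) with hAdef
  have hgs : Summable (fun k : ℕ => (M : ℝ) ^ (k + M) / ((k + M)! : ℝ)) := by
    exact_mod_cast (summable_nat_add_iff M).2 (Real.summable_pow_div_factorial (M : ℝ))
  have htail : τ ≤ A := by
    have hpt : ∀ k : ℕ, f (k + M) ≤
        Real.exp (-t) * (t / M) ^ M * ((M : ℝ) ^ (k + M) / ((k + M)! : ℝ)) := by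
      intro k
      have h2 : (t / M) ^ (k + M) ≤ (t / M) ^ M := by
        calc (t / M) ^ (k + M) = (t / M) ^ k * (t / M) ^ M := by rw [pow_add]
          _ ≤ 1 * (t / M) ^ M := by
              apply mul_le_mul_of_nonneg_right _ (by positivity)
              exact pow_le_one₀ (by positivity) (by
                rw [div_le_one hM0]; exact le_of_lt htM)
          _ = (t / M) ^ M := one_mul _
      have key : t ^ (k + M) ≤ (t / M) ^ M * (M : ℝ) ^ (k + M) := by
        have h1 : t ^ (k + M) = (t / M) ^ (k + M) * (M : ℝ) ^ (k + M) := by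
          rw [← mul_pow, div_mul_cancel₀ _ (ne_of_gt hM0)]
        rw [h1]
        exact mul_le_mul_of_nonneg_right h2 (by positivity)
      calc f (k + M) = Real.exp (-t) * t ^ (k + M) / ((k + M)! : ℝ) := rfl
        _ ≤ Real.exp (-t) * ((t / M) ^ M * (M : ℝ) ^ (k + M)) / ((k + M)! : ℝ) := by
            gcongr
        _ = Real.exp (-t) * (t / M) ^ M * ((M : ℝ) ^ (k + M) / ((k + M)! : ℝ)) := by
            ring
    have hsum1 : τ ≤ Real.exp (-t) * (t / M) ^ M *
        ∑' k : ℕ, (M : ℝ) ^ (k + M) / ((k + M)! : ℝ) := by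
      rw [← tsum_mul_left]
      exact Summable.tsum_le_tsum hpt ((summable_nat_add_iff M).2 hfs) (hgs.mul_left _)
    have hsum2 : ∑' k : ℕ, (M : ℝ) ^ (k + M) / ((k + M)! : ℝ) ≤ Real.exp (M : ℝ) := by
      rw [← hexp (M : ℝ), ← Summable.sum_add_tsum_nat_add M (Real.summable_pow_div_factorial (M : ℝ))]
      have : (0:ℝ) ≤ ∑ i ∈ Finset.range M, (M : ℝ) ^ i / (i ! : ℝ) :=
        Finset.sum_nonneg fun i _ => by positivity
      linarith
    have hA : A = Real.exp (-t) * (t / M) ^ M * Real.exp (M : ℝ) := by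
      rw [hAdef]
      have hlog : Real.log ((M : ℝ) / t) = -Real.log (t / M) := by
        rw [← Real.log_inv, inv_div]
      have hpow : (t / M) ^ M = Real.exp ((M : ℝ) * Real.log (t / M)) := by
        rw [Real.exp_nat_mul, Real.exp_log (by positivity)]
      rw [hpow, hlog, ← Real.exp_add, ← Real.exp_add]
      ring_nf
    rw [hA]
    calc τ ≤ Real.exp (-t) * (t / M) ^ M *
          ∑' k : ℕ, (M : ℝ) ^ (k + M) / ((k + M)! : ℝ) := hsum1
      _ ≤ Real.exp (-t) * (t / M) ^ M * Real.exp (M : ℝ) := by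
          apply mul_le_mul_of_nonneg_left hsum2 (by positivity)
  -- Operator part
  set g : ℕ → (E →L[ℝ] E) := fun k => f k • Φ ^ k with hgdef
  have hgnorm : ∀ k, ‖g k‖ ≤ f k := by
    intro k
    rw [hgdef]
    have hns : ‖f k • Φ ^ k‖ = |f k| * ‖Φ ^ k‖ := by
      have := norm_smul (α := ℝ) (β := E →L[ℝ] E) (f k) (Φ ^ k)
      rw [Real.norm_eq_abs] at this
      exact this
    calc ‖f k • Φ ^ k‖ = |f k| * ‖Φ ^ k‖ := hns
      _ ≤ f k * 1 := by
          rw [abs_of_nonneg (hf0 k)]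
          exact mul_le_mul_of_nonneg_left (hΦ k) (hf0 k)
      _ = f k := mul_one _
  have hgsum : Summable g := Summable.of_norm_bounded hfs hgnorm
  set T : E →L[ℝ] E := ∑' k, g k with hTdef
  set P : E →L[ℝ] E := ∑ k ∈ Finset.range M, g k with hPdef
  have hTP : T - P = ∑' k, g (k + M) := by
    rw [hTdef, hPdef, ← Summable.sum_add_tsum_nat_add M hgsum]
    abel
  have hTPnorm : ‖T - P‖ ≤ τ := by
    rw [hTP]
    have hfs' : Summable fun k => f (k + M) := (summable_nat_add_iff M).2 hfs
    have hgn : Summable fun k => ‖g (k + M)‖ :=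
      Summable.of_nonneg_of_le (fun k => norm_nonneg _) (fun k => hgnorm (k + M)) hfs'
    calc ‖∑' k, g (k + M)‖ ≤ ∑' k, ‖g (k + M)‖ := norm_tsum_le_tsum_norm hgn
      _ ≤ ∑' k, f (k + M) := Summable.tsum_le_tsum (fun k => hgnorm (k + M)) hgn hfs'
  have hPnorm : ‖P‖ ≤ S := by
    rw [hPdef, hSdef]
    calc ‖∑ k ∈ Finset.range M, g k‖ ≤ ∑ k ∈ Finset.range M, ‖g k‖ := norm_sum_le _ _
      _ ≤ ∑ k ∈ Finset.range M, f k := Finset.sum_le_sum fun k _ => hgnorm k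
  have hSinv : 1 ≤ S⁻¹ := (one_le_inv₀ hSpos).2 hS1
  have hmid : ‖P - S⁻¹ • P‖ ≤ τ := by
    have : P - S⁻¹ • P = (1 - S⁻¹) • P := by rw [sub_smul, one_smul]
    have hns : ‖(1 - S⁻¹) • P‖ = |1 - S⁻¹| * ‖P‖ := by
      have := norm_smul (α := ℝ) (β := E →L[ℝ] E) (1 - S⁻¹) P
      rw [Real.norm_eq_abs] at this
      exact this
    rw [this, hns, abs_of_nonpos (by linarith), neg_sub]
    calc (S⁻¹ - 1) * ‖P‖ ≤ (S⁻¹ - 1) * S :=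
          mul_le_mul_of_nonneg_left hPnorm (by linarith)
      _ = 1 - S := by field_simp
      _ = τ := by linarith
  have hfinal : ‖T - S⁻¹ • P‖ ≤ 2 * τ := by
    calc ‖T - S⁻¹ • P‖ = ‖(T - P) + (P - S⁻¹ • P)‖ := by
          congr 1
          abel
      _ ≤ ‖T - P‖ + ‖P - S⁻¹ • P‖ := norm_add_le _ _
      _ ≤ τ + τ := add_le_add hTPnorm hmid
      _ = 2 * τ := by ring
  have hgoal : ‖T - S⁻¹ • P‖ ≤ 2 * A := by
    calc ‖T - S⁻¹ • P‖ ≤ 2 * τ := hfinal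
      _ ≤ 2 * A := by linarith
  have hcast : ((M : ℕ) : ℝ) = (N : ℝ) + 1 := by push_cast [hMdef]; ring
  rw [hAdef, hcast] at hgoal
  convert hgoal using 2
end
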